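/- Fix ν ∈ M_σ, n ∈ ℕ and μ ∈ C_n. For each k ≥ n, among all convex combinations ν_k = Σ_{ξ∈C_k} p_k(ξ)·ξ of measures in C_k satisfying π_k(ν_k) = π_k(ν), define u_k as the minimal possible value of Σ_{ξ∈C_k, per(ξ)≥per(μ)} p_k(ξ)·ξ(B_{μ,n}). Then the sequence (u_k)_{k≥n} is monotone nondecreasing. -/

import Mathlib

open Filter Set MeasureTheory
open scoped ENNReal

abbrev Omega : Type := ℕ → Bool

def shift (x : Omega) : Omega := fun n => x (n + 1)

/-- The cylinder determined by a word of length `n` (as a function `Fin n → Bool`). -/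
def cylF {n : ℕ} (w : Fin n → Bool) : Set Omega := {x | ∀ i : Fin n, x i = w i}

/-- The cylinder determined by a finite word (as a list). -/
def cylL (w : List Bool) : Set Omega := {x | ∀ i : Fin w.length, x (i : ℕ) = w.get i}

/-- A shift-invariant Borel probability measure on `Ω`. -/
def InvariantProb (μ : Measure Omega) : Prop :=
  IsProbabilityMeasure μ ∧ ∀ s : Set Omega, MeasurableSet s → μ (shift ⁻¹' s) = μ s

/-- `μ` is a maximizing measure for `f`. -/
def IsMaxMeasure (f : Omega → ℝ) (μ : Measure Omega) : Prop :=
  InvariantProb μ ∧ ∀ ν : Measure Omega, InvariantProb ν → ∫ x, f x ∂ν ≤ ∫ x, f x ∂μ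

/-- The uniform measure on the orbit segment `x, σx, …, σ^{p-1}x`. -/
noncomputable def orbitMeasure (x : Omega) (p : ℕ) : Measure Omega :=
  (p : ℝ≥0∞)⁻¹ • ∑ j ∈ Finset.range p, MeasureTheory.Measure.dirac (shift^[j] x)

/-- A periodic measure: an invariant measure supported on a periodic orbit. -/
def IsPeriodicMeasure (μ : Measure Omega) : Prop :=
  ∃ (x : Omega) (p : ℕ), 0 < p ∧ shift^[p] x = x ∧ μ = orbitMeasure x p

/-- The period of (the orbit supporting) a periodic measure. -/
noncomputable def perM (μ : Measure Omega) : ℕ :=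
  sInf {p | 0 < p ∧ ∃ x, shift^[p] x = x ∧ μ = orbitMeasure x p}

/-- The (topological) support of a measure. -/
def msupp (μ : Measure Omega) : Set Omega :=
  {x | ∀ U : Set Omega, IsOpen U → x ∈ U → 0 < μ U}

/-- `B_{μ,k}`: the union of all cylinders of level `k` meeting the support of `μ`. -/
def Bbasin (μ : Measure Omega) (k : ℕ) : Set Omega :=
  {x | ∃ y ∈ msupp μ, ∀ i, i < k → x i = y i}

/-- Membership in `𝒞_n`: periodic measures whose `G_n`-itinerary is a cycle, i.e. each
cylinder of level `n-1` contains at most one point of the support. -/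
def MemCn (n : ℕ) (μ : Measure Omega) : Prop :=
  IsPeriodicMeasure μ ∧
    ∀ x ∈ msupp μ, ∀ y ∈ msupp μ, (∀ k, k + 1 < n → x k = y k) → x = y

/-- The set of values `Σ_{ξ ∈ 𝒞_k, per(ξ) ≥ per(μ)} p_k(ξ) ξ(B_{μ,n})` over all convex
combinations `ν_k = Σ_{ξ ∈ 𝒞_k} p_k(ξ) ξ` of measures in `𝒞_k` with `π_k(ν_k) = π_k(ν)`. -/
def ukValues (ν μ : MeasureTheory.Measure Omega) (n k : ℕ) : Set ℝ :=
  {u | ∃ (m : ℕ) (ξ : Fin m → MeasureTheory.Measure Omega) (q : Fin m → ℝ),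
    (∀ i, MemCn k (ξ i)) ∧ (∀ i, 0 ≤ q i) ∧ (∑ i, q i = 1) ∧
    (∀ w : Fin k → Bool,
      (∑ i, q i * ((ξ i) (cylF w)).toReal) = (ν (cylF w)).toReal) ∧
    u = ∑ i ∈ Finset.univ.filter (fun i => perM μ ≤ perM (ξ i)),
          q i * ((ξ i) (Bbasin μ n)).toReal}

attribute [local instance] Classical.propDecidable

lemma shift_iter_apply (x : Omega) (j i : ℕ) : shift^[j] x i = x (i + j) := by
  induction j generalizing x i with
  | zero => rfl
  | succ j ih =>
    rw [Function.iterate_succ_apply]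
    exact ih (shift x) i

/-- window of x at position t, length m -/
def wnd (x : Omega) (t m : ℕ) : Fin m → Bool := fun i => x (t + i)

lemma mem_cylF {n : ℕ} {w : Fin n → Bool} {x : Omega} : x ∈ cylF w ↔ ∀ i : Fin n, x i = w i :=
  Iff.rfl

lemma isOpen_cylF {n : ℕ} (w : Fin n → Bool) : IsOpen (cylF w) := by
  have : cylF w = ⋂ i : Fin n, {x : Omega | x i = w i} := by
    ext x; simp [cylF, Set.mem_iInter]
  rw [this]
  exact isOpen_iInter_of_finite fun i =>
    (continuous_apply (A := fun _ : ℕ => Bool) (i : ℕ)).isOpen_preimage {w i} (isOpen_discrete _)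

lemma measurableSet_cylF {n : ℕ} (w : Fin n → Bool) : MeasurableSet (cylF w) := by
  have : cylF w = ⋂ i : Fin n, {x : Omega | x i = w i} := by
    ext x; simp [cylF, Set.mem_iInter]
  rw [this]
  exact MeasurableSet.iInter fun i =>
    (measurable_pi_apply (X := fun _ : ℕ => Bool) (i : ℕ)) (MeasurableSet.singleton (w i))

lemma cylF_disjoint {n : ℕ} {w w' : Fin n → Bool} (h : w ≠ w') : Disjoint (cylF w) (cylF w') := by
  rw [Set.disjoint_left]
  intro x hx hx'
  exact h (funext fun i => (hx i).symm.trans (hx' i))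

lemma shift_iter_mem_cylF {n : ℕ} {w : Fin n → Bool} {x : Omega} {t : ℕ} :
    shift^[t] x ∈ cylF w ↔ wnd x t n = w := by
  constructor
  · intro h; funext i; rw [← h i, shift_iter_apply, wnd, Nat.add_comm]
  · intro h i; rw [shift_iter_apply, ← h]; simp [wnd, Nat.add_comm]


instance orbit_prob (x : Omega) (p : ℕ) [NeZero p] : IsProbabilityMeasure (orbitMeasure x p) := by
  constructor
  rw [orbitMeasure, Measure.smul_apply, Measure.coe_finset_sum, Finset.sum_apply]
  simp only [Measure.dirac_apply_of_mem (Set.mem_univ _)]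
  rw [Finset.sum_const, Finset.card_range, nsmul_eq_mul, mul_one, smul_eq_mul]
  rw [ENNReal.inv_mul_cancel (by exact_mod_cast NeZero.ne p) (by simp)]

lemma orbit_apply (x : Omega) (p : ℕ) (S : Set Omega) (hS : MeasurableSet S) :
    orbitMeasure x p S =
      (p : ℝ≥0∞)⁻¹ * ((Finset.range p).filter (fun j => shift^[j] x ∈ S)).card := by
  rw [orbitMeasure, Measure.smul_apply, Measure.coe_finset_sum, Finset.sum_apply, smul_eq_mul]
  congr 1
  rw [Finset.card_filter]
  push_cast
  apply Finset.sum_congr rfl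
  intro j _
  rw [Measure.dirac_apply' _ hS]
  by_cases h : shift^[j] x ∈ S <;> simp [h, Set.indicator]

lemma orbit_apply_toReal (x : Omega) {p : ℕ} (hp : 0 < p) (S : Set Omega)
    (hS : MeasurableSet S) :
    ((orbitMeasure x p) S).toReal =
      (((Finset.range p).filter (fun j => shift^[j] x ∈ S)).card : ℝ) / p := by
  rw [orbit_apply x p S hS]
  simp [ENNReal.toReal_mul, ENNReal.toReal_inv, div_eq_inv_mul]

lemma measurable_shift : Measurable shift :=
  measurable_pi_lambda _ (fun n => measurable_pi_apply (X := fun _ : ℕ => Bool) (n+1))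

lemma orbit_invariant (x : Omega) {p : ℕ} (hp : 0 < p) (hx : shift^[p] x = x) :
    ∀ S : Set Omega, MeasurableSet S → orbitMeasure x p (shift ⁻¹' S) = orbitMeasure x p S := by
  intro S hS
  rw [orbit_apply _ _ _ (hS.preimage measurable_shift), orbit_apply _ _ _ hS]
  have key : ∀ j, shift^[j] x ∈ shift ⁻¹' S ↔ shift^[j+1] x ∈ S := by
    intro j
    rw [Set.mem_preimage, Function.iterate_succ_apply']
  have h1 : ((Finset.range p).filter (fun j => shift^[j] x ∈ shift ⁻¹' S))
      = ((Finset.range p).filter (fun j => shift^[(j+1) % p] x ∈ S)) := by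
    apply Finset.filter_congr
    intro j hj
    simp only [Finset.mem_range] at hj
    rw [key j]
    rcases Nat.lt_or_ge (j+1) p with h | h
    · rw [Nat.mod_eq_of_lt h]
    · have hj1 : j + 1 = p := by omega
      rw [hj1, Nat.mod_self]
      simp [hx]
  have h2 : ((Finset.range p).filter (fun j => shift^[(j+1) % p] x ∈ S)).card
      = ((Finset.range p).filter (fun j => shift^[j] x ∈ S)).card := by
    apply Finset.card_bij (fun j _ => (j+1) % p)
    · intro a ha
      simp only [Finset.mem_filter, Finset.mem_range] at ha ⊢
      exact ⟨Nat.mod_lt _ hp, ha.2⟩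
    · intro a ha b hb h
      simp only [Finset.mem_filter, Finset.mem_range] at ha hb
      rcases Nat.lt_or_ge (a+1) p with h1 | h1 <;> rcases Nat.lt_or_ge (b+1) p with h2 | h2
      · rw [Nat.mod_eq_of_lt h1, Nat.mod_eq_of_lt h2] at h; omega
      · have hb1 : b + 1 = p := by omega
        rw [Nat.mod_eq_of_lt h1, hb1, Nat.mod_self] at h; omega
      · have ha1 : a + 1 = p := by omega
        rw [Nat.mod_eq_of_lt h2, ha1, Nat.mod_self] at h; omega
      · omega
    · intro b hb
      simp only [Finset.mem_filter, Finset.mem_range] at hb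
      rcases Nat.eq_zero_or_pos b with rfl | hb0
      · refine ⟨p - 1, ?_, ?_⟩
        · simp only [Finset.mem_filter, Finset.mem_range]
          have hmod : (p - 1 + 1) % p = 0 := by
            have h3 : p - 1 + 1 = p := by omega
            rw [h3, Nat.mod_self]
          rw [hmod]
          exact ⟨by omega, by simpa using hb.2⟩
        · have h3 : p - 1 + 1 = p := by omega
          rw [h3, Nat.mod_self]
      · refine ⟨b - 1, ?_, ?_⟩
        · simp only [Finset.mem_filter, Finset.mem_range]
          have h3 : (b - 1 + 1) % p = b := by
            have h4 : b - 1 + 1 = b := by omega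
            rw [h4, Nat.mod_eq_of_lt hb.1]
          rw [h3]
          exact ⟨by omega, hb.2⟩
        · have h4 : b - 1 + 1 = b := by omega
          rw [h4, Nat.mod_eq_of_lt hb.1]
  rw [h1, h2]

example (U : Set Omega) (h : IsOpen U) : MeasurableSet U := h.measurableSet

lemma orbit_mem_msupp {x : Omega} {p : ℕ} (hp : 0 < p) {j : ℕ} (hj : j < p) :
    shift^[j] x ∈ msupp (orbitMeasure x p) := by
  intro U hU hxU
  rw [orbit_apply _ _ _ hU.measurableSet]
  apply ENNReal.mul_pos
  · simp [hp.ne']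
  · have : j ∈ (Finset.range p).filter (fun j => shift^[j] x ∈ U) := by
      simp [Finset.mem_filter, Finset.mem_range, hj, hxU]
    have hc : 0 < ((Finset.range p).filter (fun j => shift^[j] x ∈ U)).card :=
      Finset.card_pos.mpr ⟨j, this⟩
    exact_mod_cast hc.ne'

lemma msupp_orbit_subset (x : Omega) (p : ℕ) :
    msupp (orbitMeasure x p) ⊆ {z | ∃ j, j < p ∧ z = shift^[j] x} := by
  intro z hz
  by_contra hzorb
  simp only [Set.mem_setOf_eq, not_exists, not_and] at hzorb
  have hdiff : ∀ j, j < p → ∃ i, shift^[j] x i ≠ z i := by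
    intro j hj
    by_contra h
    push_neg at h
    exact hzorb j hj (funext fun i => (h i).symm).symm.symm
  classical
  choose I hI using hdiff
  set N := ((Finset.range p).sup (fun j => if h : j < p then I j h else 0)) + 1 with hN
  set U := cylF (fun i : Fin N => z i) with hU
  have hzU : z ∈ U := fun i => rfl
  have hopen : IsOpen U := isOpen_cylF _
  have hmU : orbitMeasure x p U = 0 := by
    rw [orbit_apply _ _ _ hopen.measurableSet]
    have : (Finset.range p).filter (fun j => shift^[j] x ∈ U) = ∅ := by
      rw [Finset.filter_eq_empty_iff]
      intro j hj
      simp only [Finset.mem_range] at hj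
      intro hmem
      have hle : I j hj < N := by
        have : I j hj ≤ (Finset.range p).sup (fun j => if h : j < p then I j h else 0) := by
          have := Finset.le_sup (f := fun j => if h : j < p then I j h else 0)
            (Finset.mem_range.mpr hj)
          simpa [hj] using this
        omega
      have := hmem ⟨I j hj, hle⟩
      exact hI j hj this
    rw [this]
    simp
  have := hz U hopen hzU
  rw [hmU] at this
  exact lt_irrefl 0 this

/-- source vertex of an edge -/
def tl {K : ℕ} (e : Fin (K+1) → Bool) : Fin K → Bool := fun i => e i.castSucc
/-- target vertex of an edge -/
def hdv {K : ℕ} (e : Fin (K+1) → Bool) : Fin K → Bool := fun i => e i.succ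

lemma card_filter_rotate {p : ℕ} (hp : 0 < p) (P : ℕ → Prop) [DecidablePred P] :
    ((Finset.range p).filter (fun j => P ((j+1) % p))).card
      = ((Finset.range p).filter P).card := by
  apply Finset.card_bij (fun j _ => (j+1) % p)
  · intro a ha
    simp only [Finset.mem_filter, Finset.mem_range] at ha ⊢
    exact ⟨Nat.mod_lt _ hp, ha.2⟩
  · intro a ha b hb h
    simp only [Finset.mem_filter, Finset.mem_range] at ha hb
    rcases Nat.lt_or_ge (a+1) p with h1 | h1 <;> rcases Nat.lt_or_ge (b+1) p with h2 | h2
    · rw [Nat.mod_eq_of_lt h1, Nat.mod_eq_of_lt h2] at h; omega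
    · have hb1 : b + 1 = p := by omega
      rw [Nat.mod_eq_of_lt h1, hb1, Nat.mod_self] at h; omega
    · have ha1 : a + 1 = p := by omega
      rw [Nat.mod_eq_of_lt h2, ha1, Nat.mod_self] at h; omega
    · omega
  · intro b hb
    simp only [Finset.mem_filter, Finset.mem_range] at hb
    rcases Nat.eq_zero_or_pos b with rfl | hb0
    · refine ⟨p - 1, ?_, ?_⟩
      · simp only [Finset.mem_filter, Finset.mem_range]
        have hmod : (p - 1 + 1) % p = 0 := by
          have h3 : p - 1 + 1 = p := by omega
          rw [h3, Nat.mod_self]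
        rw [hmod]
        exact ⟨by omega, hb.2⟩
      · have h3 : p - 1 + 1 = p := by omega
        rw [h3, Nat.mod_self]
    · refine ⟨b - 1, ?_, ?_⟩
      · simp only [Finset.mem_filter, Finset.mem_range]
        have h3 : (b - 1 + 1) % p = b := by
          have h4 : b - 1 + 1 = b := by omega
          rw [h4, Nat.mod_eq_of_lt hb.1]
        rw [h3]
        exact ⟨by omega, hb.2⟩
      · have h4 : b - 1 + 1 = b := by omega
        rw [h4, Nat.mod_eq_of_lt hb.1]

lemma find_cycle {K : ℕ} (f : (Fin (K+1) → Bool) → ℝ) (hf0 : ∀ e, 0 ≤ f e)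
    (hKir : ∀ v : Fin K → Bool,
      ∑ e ∈ Finset.univ.filter (fun e => tl e = v), f e
        = ∑ e ∈ Finset.univ.filter (fun e => hdv e = v), f e)
    (e0 : Fin (K+1) → Bool) (he0 : 0 < f e0) :
    ∃ (d : ℕ) (ε : ℕ → Fin (K+1) → Bool), 0 < d ∧ (∀ t, ε (t + d) = ε t) ∧
      (∀ t, 0 < f (ε t)) ∧ (∀ t, hdv (ε t) = tl (ε (t+1))) ∧
      (∀ t s, t < d → s < d → tl (ε t) = tl (ε s) → t = s) := by
  classical
  have hnext : ∀ a, 0 < f a → ∃ b, tl b = hdv a ∧ 0 < f b := by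
    intro a ha
    by_contra h
    push_neg at h
    have hin : f a ≤ ∑ e ∈ Finset.univ.filter (fun e => hdv e = hdv a), f e := by
      apply Finset.single_le_sum (fun e _ => hf0 e)
      simp
    rw [← hKir] at hin
    have hout : ∑ e ∈ Finset.univ.filter (fun e => tl e = hdv a), f e ≤ 0 := by
      apply Finset.sum_nonpos
      intro e he
      simp only [Finset.mem_filter] at he
      exact h e he.2
    linarith
  let nxt : (Fin (K+1) → Bool) → (Fin (K+1) → Bool) := fun a =>
    if h : ∃ b, tl b = hdv a ∧ 0 < f b then h.choose else a
  let seq : ℕ → Fin (K+1) → Bool := fun t => nxt^[t] e0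
  have hpos : ∀ t, 0 < f (seq t) := by
    intro t
    induction t with
    | zero => exact he0
    | succ t ih =>
      show 0 < f (nxt^[t+1] e0)
      rw [Function.iterate_succ_apply']
      have hex := hnext _ ih
      show 0 < f (nxt (seq t))
      simp only [nxt, dif_pos hex]
      exact hex.choose_spec.2
  have hcompat : ∀ t, tl (seq (t+1)) = hdv (seq t) := by
    intro t
    have hex := hnext _ (hpos t)
    show tl (nxt^[t+1] e0) = _
    rw [Function.iterate_succ_apply']
    show tl (nxt (seq t)) = _
    simp only [nxt, dif_pos hex]
    exact hex.choose_spec.1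
  -- pigeonhole on vertices
  have hcard : Fintype.card (Fin K → Bool)
      < Fintype.card (Fin (Fintype.card (Fin K → Bool) + 1)) := by
    rw [Fintype.card_fin]
    exact Nat.lt_succ_self _
  obtain ⟨a, b, hab, heq⟩ := Fintype.exists_ne_map_eq_of_card_lt
    (fun t : Fin (Fintype.card (Fin K → Bool) + 1) => tl (seq t)) hcard
  have hDne : {d | 0 < d ∧ ∃ t, tl (seq t) = tl (seq (t + d))}.Nonempty := by
    rcases Nat.lt_or_ge (a : ℕ) b with h | h
    · exact ⟨(b : ℕ) - a, by omega, a, by rw [show (a : ℕ) + ((b:ℕ) - a) = b by omega]; exact heq⟩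
    · have hba : (b : ℕ) < a := by
        rcases Nat.lt_or_ge (b : ℕ) a with h' | h'
        · exact h'
        · exfalso; apply hab; apply Fin.ext; omega
      exact ⟨(a:ℕ) - b, by omega, b, by rw [show (b : ℕ) + ((a:ℕ) - b) = a by omega]; exact heq.symm⟩
  obtain ⟨hd0, t0, ht0⟩ := Nat.sInf_mem hDne
  set d := sInf {d | 0 < d ∧ ∃ t, tl (seq t) = tl (seq (t + d))} with hdDef
  have hmod : ∀ r : ℕ, (r+1) % d = (r % d + 1) % d := fun r =>
    ((Nat.mod_modEq r d).add_right 1).symm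
  refine ⟨d, fun r => seq (t0 + (r % d)), hd0, ?_, fun r => hpos _, ?_, ?_⟩
  · intro t
    show seq (t0 + (t + d) % d) = seq (t0 + t % d)
    rw [Nat.add_mod_right]
  · intro r
    show hdv (seq (t0 + r % d)) = tl (seq (t0 + (r+1) % d))
    rcases Nat.lt_or_ge (r % d + 1) d with h | h
    · have h2 : (r+1) % d = r % d + 1 := by
        rw [hmod r, Nat.mod_eq_of_lt h]
      rw [h2, ← Nat.add_assoc]
      exact (hcompat (t0 + r % d)).symm
    · have hrd : r % d + 1 = d := by
        have := Nat.mod_lt r hd0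
        omega
      have h2 : (r+1) % d = 0 := by
        rw [hmod r, hrd, Nat.mod_self]
      rw [h2, Nat.add_zero, ht0, show t0 + d = t0 + r % d + 1 by omega]
      exact (hcompat (t0 + r % d)).symm
  · intro t s ht hs hts
    have hts' : tl (seq (t0 + t)) = tl (seq (t0 + s)) := by
      simpa [Nat.mod_eq_of_lt ht, Nat.mod_eq_of_lt hs] using hts
    by_contra hne
    rcases Nat.lt_or_ge t s with h | h
    · have hmem : s - t ∈ {d | 0 < d ∧ ∃ t', tl (seq t') = tl (seq (t' + d))} := by
        refine ⟨by omega, t0 + t, ?_⟩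
        rw [show t0 + t + (s - t) = t0 + s by omega]
        exact hts'
      have := Nat.sInf_le hmem
      omega
    · have hst : s < t := by omega
      have hmem : t - s ∈ {d | 0 < d ∧ ∃ t', tl (seq t') = tl (seq (t' + d))} := by
        refine ⟨by omega, t0 + s, ?_⟩
        rw [show t0 + s + (t - s) = t0 + t by omega]
        exact hts'.symm
      have := Nat.sInf_le hmem
      omega

lemma circ_decomp {K : ℕ} (N : ℕ) : ∀ (f : (Fin (K+1) → Bool) → ℝ),
    (Finset.univ.filter (fun e => f e ≠ 0)).card ≤ N →
    (∀ e, 0 ≤ f e) →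
    (∀ v : Fin K → Bool, ∑ e ∈ Finset.univ.filter (fun e => tl e = v), f e
        = ∑ e ∈ Finset.univ.filter (fun e => hdv e = v), f e) →
    ∃ (m : ℕ) (y : Fin m → Omega) (p : Fin m → ℕ) (δ : Fin m → ℝ),
      (∀ j, 0 < p j) ∧ (∀ j, shift^[p j] (y j) = y j) ∧ (∀ j, 0 ≤ δ j) ∧
      (∀ j t s, t < p j → s < p j → wnd (y j) t K = wnd (y j) s K → t = s) ∧
      (∀ j, p j ≤ (Finset.univ.filter
          (fun v : Fin K → Bool => ∃ e, tl e = v ∧ 0 < f e)).card) ∧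
      (∀ e : Fin (K+1) → Bool, f e =
        ∑ j, δ j * (((Finset.range (p j)).filter
          (fun t => wnd (y j) t (K+1) = e)).card : ℝ)) := by
  classical
  induction N with
  | zero =>
    intro f hcard hf0 _
    have hz : ∀ e, f e = 0 := by
      intro e
      by_contra he
      have : e ∈ Finset.univ.filter (fun e => f e ≠ 0) := by simp [he]
      have := Finset.card_pos.mpr ⟨e, this⟩
      omega
    exact ⟨0, Fin.elim0, Fin.elim0, Fin.elim0, fun j => j.elim0, fun j => j.elim0,
      fun j => j.elim0, fun j => j.elim0, fun j => j.elim0,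
      fun e => by simp [hz e]⟩
  | succ N ih =>
    intro f hcard hf0 hKir
    by_cases hz : ∀ e, f e = 0
    · exact ⟨0, Fin.elim0, Fin.elim0, Fin.elim0, fun j => j.elim0, fun j => j.elim0,
        fun j => j.elim0, fun j => j.elim0, fun j => j.elim0,
        fun e => by simp [hz e]⟩
    push_neg at hz
    obtain ⟨e0, he0⟩ := hz
    have he0pos : 0 < f e0 := lt_of_le_of_ne (hf0 e0) (Ne.symm he0)
    obtain ⟨d, ε, hd0, hper, hεpos, hεcompat, hεdist⟩ := find_cycle f hf0 hKir e0 he0pos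
    -- the periodic point associated to the cycle
    set y0 : Omega := fun i => ε i ⟨0, Nat.succ_pos K⟩ with hy0
    have chain : ∀ (r : ℕ) (hr : r < K + 1) (t : ℕ),
        ε t ⟨r, hr⟩ = ε (t + r) ⟨0, Nat.succ_pos K⟩ := by
      intro r
      induction r with
      | zero => intro hr t; rfl
      | succ r ihr =>
        intro hr t
        have hrK : r < K := by omega
        have h1 : ε t ⟨r+1, hr⟩ = hdv (ε t) ⟨r, hrK⟩ := rfl
        rw [h1, hεcompat t]
        have h2 : tl (ε (t+1)) ⟨r, hrK⟩ = ε (t+1) ⟨r, by omega⟩ := rfl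
        rw [h2, ihr (by omega) (t+1), show t+1+r = t+(r+1) by omega]
    have hwnd1 : ∀ t, wnd y0 t (K+1) = ε t := by
      intro t
      funext i
      show ε (t + i) ⟨0, Nat.succ_pos K⟩ = ε t i
      rw [← chain i i.isLt t]
    have hwndK : ∀ t, wnd y0 t K = tl (ε t) := by
      intro t
      funext i
      show ε (t + i) ⟨0, Nat.succ_pos K⟩ = ε t i.castSucc
      have : ε t i.castSucc = ε t ⟨(i : ℕ), by omega⟩ := rfl
      rw [this, chain i (by omega) t]
    have hy0per : shift^[d] y0 = y0 := by
      funext i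
      rw [shift_iter_apply]
      show ε (i + d) ⟨0, Nat.succ_pos K⟩ = ε i ⟨0, Nat.succ_pos K⟩
      rw [hper i]
    set E := (Finset.range d).image ε with hE
    have hEne : E.Nonempty := ⟨ε 0, Finset.mem_image.mpr ⟨0, Finset.mem_range.mpr hd0, rfl⟩⟩
    set δ0 := E.inf' hEne f with hδ0def
    have hδ0 : 0 < δ0 := by
      rw [hδ0def, Finset.lt_inf'_iff]
      intro b hb
      obtain ⟨t, _, rfl⟩ := Finset.mem_image.mp hb
      exact hεpos t
    obtain ⟨estar, hestar, hfstar⟩ := Finset.exists_mem_eq_inf' hEne f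
    set g : (Fin (K+1) → Bool) → ℝ := fun e => f e - δ0 * (if e ∈ E then (1:ℝ) else 0)
      with hg
    have hg0 : ∀ e, 0 ≤ g e := by
      intro e
      by_cases he : e ∈ E
      · have := Finset.inf'_le f he
        simp only [hg, he, if_true, mul_one]
        rw [← hδ0def] at this
        linarith
      · simp [hg, he]
        exact hf0 e
    have hgle : ∀ e, g e ≤ f e := by
      intro e
      simp only [hg]
      have : 0 ≤ δ0 * (if e ∈ E then (1:ℝ) else 0) := by
        apply mul_nonneg hδ0.le
        split <;> norm_num
      linarith
    have hgpos_imp : ∀ e, 0 < g e → 0 < f e := fun e h => lt_of_lt_of_le h (hgle e)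
    have hsupp_sub : ∀ e, g e ≠ 0 → f e ≠ 0 := by
      intro e hge
      by_cases he : e ∈ E
      · obtain ⟨t, _, rfl⟩ := Finset.mem_image.mp he
        exact (hεpos t).ne'
      · simp only [hg, he, if_false, mul_zero, sub_zero] at hge
        exact hge
    have hgstar : g estar = 0 := by
      simp only [hg, hestar, if_true, mul_one]
      rw [← hδ0def] at hfstar
      linarith [hfstar]
    have hfstar_ne : f estar ≠ 0 := by
      rw [← hδ0def] at hfstar
      rw [← hfstar]
      exact hδ0.ne'
    have hcard' : (Finset.univ.filter (fun e => g e ≠ 0)).card ≤ N := by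
      have hss : Finset.univ.filter (fun e => g e ≠ 0)
          ⊂ Finset.univ.filter (fun e => f e ≠ 0) := by
        constructor
        · intro e he
          simp only [Finset.mem_filter, Finset.mem_univ, true_and] at he ⊢
          exact hsupp_sub e he
        · intro hsub
          have h1 : estar ∈ Finset.univ.filter (fun e => f e ≠ 0) := by simp [hfstar_ne]
          have h2 := hsub h1
          simp only [Finset.mem_filter, Finset.mem_univ, true_and] at h2
          exact h2 hgstar
      have := Finset.card_lt_card hss
      omega
    -- Kirchhoff for g
    have hχsum : ∀ (A : Finset (Fin (K+1) → Bool)),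
        ∑ e ∈ A, (if e ∈ E then (1:ℝ) else 0) = ((A.filter (· ∈ E)).card : ℝ) := by
      intro A
      rw [Finset.sum_boole]
    have hcnt_tl : ∀ v, (Finset.univ.filter (fun e => tl e = v)).filter (· ∈ E)
        = (Finset.univ.filter (fun e => tl e = v ∧ e ∈ E)) := by
      intro v
      rw [Finset.filter_filter]
    have hcount_tl : ∀ v : Fin K → Bool,
        (Finset.univ.filter (fun e => tl e = v ∧ e ∈ E)).card
          = ((Finset.range d).filter (fun t => tl (ε t) = v)).card := by
      intro v
      symm
      apply Finset.card_bij (fun t _ => ε t)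
      · intro t ht
        simp only [Finset.mem_filter, Finset.mem_range] at ht ⊢
        exact ⟨Finset.mem_univ _, ht.2, Finset.mem_image.mpr ⟨t, Finset.mem_range.mpr ht.1, rfl⟩⟩
      · intro a ha b hb h
        simp only [Finset.mem_filter, Finset.mem_range] at ha hb
        exact hεdist a b ha.1 hb.1 (congrArg tl h)
      · intro e he
        simp only [Finset.mem_filter, Finset.mem_univ, true_and] at he
        obtain ⟨hev, heE⟩ := he
        obtain ⟨t, ht, rfl⟩ := Finset.mem_image.mp heE
        refine ⟨t, ?_, rfl⟩
        simp only [Finset.mem_filter, Finset.mem_range]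
        exact ⟨Finset.mem_range.mp ht, hev⟩
    have hcount_hd : ∀ v : Fin K → Bool,
        (Finset.univ.filter (fun e => hdv e = v ∧ e ∈ E)).card
          = ((Finset.range d).filter (fun t => hdv (ε t) = v)).card := by
      intro v
      symm
      apply Finset.card_bij (fun t _ => ε t)
      · intro t ht
        simp only [Finset.mem_filter, Finset.mem_range] at ht ⊢
        exact ⟨Finset.mem_univ _, ht.2, Finset.mem_image.mpr ⟨t, Finset.mem_range.mpr ht.1, rfl⟩⟩
      · intro a ha b hb h
        simp only [Finset.mem_filter, Finset.mem_range] at ha hb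
        exact hεdist a b ha.1 hb.1 (congrArg tl h)
      · intro e he
        simp only [Finset.mem_filter, Finset.mem_univ, true_and] at he
        obtain ⟨hev, heE⟩ := he
        obtain ⟨t, ht, rfl⟩ := Finset.mem_image.mp heE
        refine ⟨t, ?_, rfl⟩
        simp only [Finset.mem_filter, Finset.mem_range]
        exact ⟨Finset.mem_range.mp ht, hev⟩
    have hrot : ∀ v : Fin K → Bool,
        ((Finset.range d).filter (fun t => hdv (ε t) = v)).card
          = ((Finset.range d).filter (fun t => tl (ε t) = v)).card := by
      intro v
      have h1 : (Finset.range d).filter (fun t => hdv (ε t) = v)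
          = (Finset.range d).filter (fun t => tl (ε ((t+1) % d)) = v) := by
        apply Finset.filter_congr
        intro t ht
        simp only [Finset.mem_range] at ht
        rcases Nat.lt_or_ge (t+1) d with h | h
        · rw [Nat.mod_eq_of_lt h, hεcompat t]
        · have ht1 : t + 1 = d := by omega
          have hεd : ε d = ε 0 := by simpa using hper 0
          rw [hεcompat t, ht1, Nat.mod_self, hεd]
      rw [h1]
      exact card_filter_rotate hd0 (fun t => tl (ε t) = v)
  -- Kirchhoff for g
    have hgKir : ∀ v : Fin K → Bool,
        ∑ e ∈ Finset.univ.filter (fun e => tl e = v), g e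
          = ∑ e ∈ Finset.univ.filter (fun e => hdv e = v), g e := by
      intro v
      simp only [hg]
      rw [Finset.sum_sub_distrib, Finset.sum_sub_distrib, ← Finset.mul_sum, ← Finset.mul_sum,
        hχsum, hχsum, hKir v, hcnt_tl v]
      have hcnt_hd : (Finset.univ.filter (fun e => hdv e = v)).filter (· ∈ E)
          = (Finset.univ.filter (fun e => hdv e = v ∧ e ∈ E)) := by
        rw [Finset.filter_filter]
      rw [hcnt_hd, hcount_tl, hcount_hd, hrot]
    obtain ⟨m, y', p', δ', h1, h2, h3, h4, h5, h6⟩ := ih g hcard' hg0 hgKir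
    refine ⟨m+1, Fin.cons y0 y', Fin.cons d p', Fin.cons δ0 δ', ?_, ?_, ?_, ?_, ?_, ?_⟩
    · intro j
      refine Fin.cases ?_ ?_ j
      · simpa using hd0
      · intro j'; simpa using h1 j'
    · intro j
      refine Fin.cases ?_ ?_ j
      · simpa using hy0per
      · intro j'; simpa using h2 j'
    · intro j
      refine Fin.cases ?_ ?_ j
      · simpa using hδ0.le
      · intro j'; simpa using h3 j'
    · intro j
      refine Fin.cases ?_ ?_ j
      · simp only [Fin.cons_zero]
        intro t s ht hs hw
        apply hεdist t s ht hs
        rw [← hwndK t, ← hwndK s, hw]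
      · intro j'
        simp only [Fin.cons_succ]
        exact h4 j'
    · intro j
      refine Fin.cases ?_ ?_ j
      · simp only [Fin.cons_zero]
        have : d = (Finset.range d).card := (Finset.card_range d).symm
        rw [this]
        apply Finset.card_le_card_of_injOn (fun t => tl (ε t))
        · intro t ht
          simp only [Finset.mem_coe, Finset.mem_range] at ht
          simp only [Finset.mem_coe, Finset.mem_filter, Finset.mem_univ, true_and]
          exact ⟨ε t, rfl, hεpos t⟩
        · intro a ha b hb h
          simp only [Finset.coe_range, Set.mem_Iio] at ha hb
          exact hεdist a b ha hb h
      · intro j'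
        simp only [Fin.cons_succ]
        refine (h5 j').trans (Finset.card_le_card ?_)
        intro v hv
        simp only [Finset.mem_filter, Finset.mem_univ, true_and] at hv ⊢
        obtain ⟨e, he1, he2⟩ := hv
        exact ⟨e, he1, hgpos_imp e he2⟩
    · intro e
      rw [Fin.sum_univ_succ]
      simp only [Fin.cons_zero, Fin.cons_succ]
      have hcnt0 : (((Finset.range d).filter (fun t => wnd y0 t (K+1) = e)).card : ℝ)
          = if e ∈ E then 1 else 0 := by
        have heq : (Finset.range d).filter (fun t => wnd y0 t (K+1) = e)
            = (Finset.range d).filter (fun t => ε t = e) := by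
          apply Finset.filter_congr
          intro t _
          rw [hwnd1 t]
        rw [heq]
        by_cases he : e ∈ E
        · obtain ⟨t, ht, rfl⟩ := Finset.mem_image.mp he
          have : (Finset.range d).filter (fun s => ε s = ε t) = {t} := by
            ext s
            simp only [Finset.mem_filter, Finset.mem_range, Finset.mem_singleton]
            constructor
            · rintro ⟨hs, hse⟩
              exact hεdist s t hs (Finset.mem_range.mp ht) (by rw [hse])
            · rintro rfl
              exact ⟨Finset.mem_range.mp ht, rfl⟩
          rw [this]
          simp [he]
        · have : (Finset.range d).filter (fun s => ε s = e) = ∅ := by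
            rw [Finset.filter_eq_empty_iff]
            intro s hs
            intro hse
            apply he
            rw [← hse]
            exact Finset.mem_image.mpr ⟨s, hs, rfl⟩
          rw [this]
          simp [he]
      rw [hcnt0]
      have := h6 e
      simp only [hg] at this
      linarith [this]

lemma meas_union_cyl {k : ℕ} (ρ : Measure Omega) [IsFiniteMeasure ρ]
    (W : Finset (Fin k → Bool)) :
    (ρ (⋃ w ∈ W, cylF w)).toReal = ∑ w ∈ W, (ρ (cylF w)).toReal := by
  rw [measure_biUnion_finset ?hd (fun w _ => measurableSet_cylF w)]
  · exact ENNReal.toReal_sum (fun w _ => measure_ne_top ρ _)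
  · intro w _ w' _ hne
    exact cylF_disjoint hne

lemma univ_eq_cyl (k : ℕ) :
    (Set.univ : Set Omega) = ⋃ w ∈ (Finset.univ : Finset (Fin k → Bool)), cylF w := by
  ext x
  simp only [Set.mem_univ, true_iff, Set.mem_iUnion]
  exact ⟨fun i => x i, Finset.mem_univ _, fun i => rfl⟩

lemma cyl_eq_tl {K : ℕ} (v : Fin K → Bool) :
    (cylF v : Set Omega)
      = ⋃ e ∈ Finset.univ.filter (fun e : Fin (K+1) → Bool => tl e = v), cylF e := by
  ext x
  simp only [Set.mem_iUnion, Finset.mem_filter, Finset.mem_univ, true_and]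
  constructor
  · intro hx
    refine ⟨fun i => x i, ?_, fun i => rfl⟩
    funext i
    show x ((i.castSucc : Fin (K+1)) : ℕ) = v i
    exact hx i
  · rintro ⟨e, rfl, hxe⟩
    intro i
    exact hxe i.castSucc
  done

lemma shiftpre_eq_hd {K : ℕ} (v : Fin K → Bool) :
    shift ⁻¹' (cylF v)
      = ⋃ e ∈ Finset.univ.filter (fun e : Fin (K+1) → Bool => hdv e = v), cylF e := by
  ext x
  simp only [Set.mem_preimage, Set.mem_iUnion, Finset.mem_filter, Finset.mem_univ, true_and]
  constructor
  · intro hx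
    refine ⟨fun i => x i, ?_, fun i => rfl⟩
    funext i
    show x ((i.succ : Fin (K+1)) : ℕ) = v i
    exact hx i
  · rintro ⟨e, rfl, hxe⟩
    intro i
    exact hxe i.succ

lemma cyl_marg {n k : ℕ} (h : n ≤ k) (w : Fin n → Bool) :
    (cylF w : Set Omega)
      = ⋃ w' ∈ Finset.univ.filter
          (fun w' : Fin k → Bool => ∀ i : Fin n, w' (Fin.castLE h i) = w i), cylF w' := by
  ext x
  simp only [Set.mem_iUnion, Finset.mem_filter, Finset.mem_univ, true_and]
  constructor
  · intro hx
    refine ⟨fun i => x i, fun i => hx i, fun i => rfl⟩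
  · rintro ⟨w', hw', hxw⟩
    intro i
    have h1 : x ((Fin.castLE h i : Fin k) : ℕ) = w' (Fin.castLE h i) := hxw (Fin.castLE h i)
    have h2 : ((Fin.castLE h i : Fin k) : ℕ) = (i : ℕ) := rfl
    rw [h2] at h1
    rw [h1, hw' i]

lemma cyl_marg_meas {n k : ℕ} (h : n ≤ k) (ρ : Measure Omega) [IsFiniteMeasure ρ]
    (w : Fin n → Bool) :
    (ρ (cylF w)).toReal = ∑ w' ∈ Finset.univ.filter
        (fun w' : Fin k → Bool => ∀ i : Fin n, w' (Fin.castLE h i) = w i),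
      (ρ (cylF w')).toReal := by
  rw [cyl_marg h w, meas_union_cyl]

lemma Bbasin_union {n k : ℕ} (hnk : n ≤ k) (μ : Measure Omega) :
    Bbasin μ n = ⋃ w ∈ Finset.univ.filter
        (fun w : Fin k → Bool => ∃ y ∈ msupp μ, ∀ i : Fin n, y i = w (Fin.castLE hnk i)),
      cylF w := by
  ext x
  simp only [Bbasin, Set.mem_setOf_eq, Set.mem_iUnion, Finset.mem_filter,
    Finset.mem_univ, true_and]
  constructor
  · rintro ⟨y, hy, hagree⟩
    refine ⟨fun i => x i, ⟨y, hy, fun i => ?_⟩, fun i => rfl⟩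
    have h1 : ((Fin.castLE hnk i : Fin k) : ℕ) = (i : ℕ) := rfl
    show y i = x ((Fin.castLE hnk i : Fin k) : ℕ)
    rw [h1]
    exact (hagree i i.isLt).symm
  · rintro ⟨w, ⟨y, hy, hyw⟩, hxw⟩
    refine ⟨y, hy, fun i hi => ?_⟩
    have h3 := hxw ⟨i, lt_of_lt_of_le hi hnk⟩
    have h4 := hyw ⟨i, hi⟩
    have h5 : (Fin.castLE hnk ⟨i, hi⟩ : Fin k) = ⟨i, lt_of_lt_of_le hi hnk⟩ := rfl
    rw [h5] at h4
    rw [h3, ← h4]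

lemma Bbasin_meas {n k : ℕ} (hnk : n ≤ k) (μ ρ : Measure Omega) [IsFiniteMeasure ρ] :
    (ρ (Bbasin μ n)).toReal = ∑ w ∈ Finset.univ.filter
        (fun w : Fin k → Bool => ∃ y ∈ msupp μ, ∀ i : Fin n, y i = w (Fin.castLE hnk i)),
      (ρ (cylF w)).toReal := by
  rw [Bbasin_union hnk μ, meas_union_cyl]

lemma orbit_invariantProb {x : Omega} {p : ℕ} (hp : 0 < p) (hx : shift^[p] x = x) :
    InvariantProb (orbitMeasure x p) := by
  haveI : NeZero p := ⟨hp.ne'⟩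
  exact ⟨orbit_prob x p, orbit_invariant x hp hx⟩

lemma perM_pos {ξ : Measure Omega} (hξ : IsPeriodicMeasure ξ) : 0 < perM ξ := by
  obtain ⟨x, p, hp, hx, rfl⟩ := hξ
  have hne : {p' | 0 < p' ∧ ∃ x', shift^[p'] x' = x' ∧
      orbitMeasure x p = orbitMeasure x' p'}.Nonempty := ⟨p, hp, x, hx, rfl⟩
  exact (Nat.sInf_mem hne).1

lemma perM_le {ξ : Measure Omega} {x : Omega} {p : ℕ} (hp : 0 < p)
    (hx : shift^[p] x = x) (hrep : ξ = orbitMeasure x p) : perM ξ ≤ p :=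
  Nat.sInf_le ⟨hp, x, hx, hrep.symm ▸ hrep⟩

lemma kirchhoff_of_invariant {ρ : Measure Omega} (hρ : InvariantProb ρ) (K : ℕ)
    (v : Fin K → Bool) :
    ∑ e ∈ Finset.univ.filter (fun e : Fin (K+1) → Bool => tl e = v), (ρ (cylF e)).toReal
      = ∑ e ∈ Finset.univ.filter (fun e : Fin (K+1) → Bool => hdv e = v),
          (ρ (cylF e)).toReal := by
  haveI := hρ.1
  rw [← meas_union_cyl ρ, ← meas_union_cyl ρ, ← cyl_eq_tl v, ← shiftpre_eq_hd v,
    hρ.2 _ (measurableSet_cylF v)]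

lemma measure_decomp (K : ℕ) (ρ : Measure Omega) (hρ : InvariantProb ρ) :
    ∃ (m : ℕ) (ξ : Fin m → Measure Omega) (q : Fin m → ℝ),
      (∀ j, MemCn (K+1) (ξ j)) ∧ (∀ j, 0 ≤ q j) ∧ (∑ j, q j = 1) ∧
      (∀ w : Fin (K+1) → Bool,
        (∑ j, q j * ((ξ j) (cylF w)).toReal) = (ρ (cylF w)).toReal) ∧
      (∀ j, perM (ξ j) ≤ (Finset.univ.filter
          (fun v : Fin K → Bool => ρ (cylF v) ≠ 0)).card) := by
  classical
  haveI := hρ.1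
  set f : (Fin (K+1) → Bool) → ℝ := fun e => (ρ (cylF e)).toReal with hf
  obtain ⟨m, y, p, δ, hp, hyper, hδ0, hdist, hbound, hsum⟩ :=
    circ_decomp (Finset.univ.filter (fun e => f e ≠ 0)).card f le_rfl
      (fun e => ENNReal.toReal_nonneg)
      (fun v => kirchhoff_of_invariant hρ K v)
  refine ⟨m, fun j => orbitMeasure (y j) (p j), fun j => δ j * (p j), ?_, ?_, ?_, ?_, ?_⟩
  · intro j
    refine ⟨⟨y j, p j, hp j, hyper j, rfl⟩, ?_⟩
    intro a ha b hb hab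
    have ha' := msupp_orbit_subset (y j) (p j) ha
    have hb' := msupp_orbit_subset (y j) (p j) hb
    obtain ⟨t, ht, rfl⟩ := ha'
    obtain ⟨s, hs, rfl⟩ := hb'
    have hw : wnd (y j) t K = wnd (y j) s K := by
      funext i
      have h1 : shift^[t] (y j) i = shift^[s] (y j) i := hab i (by omega)
      rw [shift_iter_apply, shift_iter_apply] at h1
      show y j (t + i) = y j (s + i)
      rw [Nat.add_comm t i, Nat.add_comm s i]
      exact h1
    rw [hdist j t s ht hs hw]
  · intro j
    exact mul_nonneg (hδ0 j) (Nat.cast_nonneg _)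
  · -- total mass
    have htot : ∑ e : Fin (K+1) → Bool, f e = 1 := by
      have h1 : (ρ (Set.univ : Set Omega)).toReal = 1 := by simp
      rw [← h1, univ_eq_cyl (K+1), meas_union_cyl]
    have h2 : ∑ e : Fin (K+1) → Bool, f e = ∑ j, δ j * (p j) := by
      rw [Finset.sum_congr rfl (fun e _ => hsum e), Finset.sum_comm]
      apply Finset.sum_congr rfl
      intro j _
      rw [← Finset.mul_sum]
      congr 1
      have := Finset.card_eq_sum_card_fiberwise
        (f := fun t => wnd (y j) t (K+1)) (s := Finset.range (p j)) (t := Finset.univ)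
        (fun x _ => Finset.mem_univ _)
      rw [Finset.card_range] at this
      exact_mod_cast this.symm
    rw [← h2, htot]
  · intro w
    have hξw : ∀ j, ((orbitMeasure (y j) (p j)) (cylF w)).toReal
        = (((Finset.range (p j)).filter (fun t => wnd (y j) t (K+1) = w)).card : ℝ) / p j := by
      intro j
      rw [orbit_apply_toReal (y j) (hp j) _ (measurableSet_cylF w)]
      have heq : (Finset.range (p j)).filter (fun t => shift^[t] (y j) ∈ cylF w)
          = (Finset.range (p j)).filter (fun t => wnd (y j) t (K+1) = w) :=
        Finset.filter_congr (fun t _ => shift_iter_mem_cylF)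
      rw [heq]
    show (∑ j, (δ j * (p j : ℝ)) * ((orbitMeasure (y j) (p j)) (cylF w)).toReal)
        = (ρ (cylF w)).toReal
    have hterm : ∀ j ∈ Finset.univ, (δ j * (p j : ℝ))
        * ((orbitMeasure (y j) (p j)) (cylF w)).toReal
        = δ j * (((Finset.range (p j)).filter
            (fun t => wnd (y j) t (K+1) = w)).card : ℝ) := by
      intro j _
      rw [hξw j]
      have hpj : (p j : ℝ) ≠ 0 := by exact_mod_cast (hp j).ne'
      field_simp
    rw [Finset.sum_congr rfl hterm, ← hsum w]
  · intro j
    refine le_trans (perM_le (hp j) (hyper j) rfl) ?_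
    refine le_trans (hbound j) (Finset.card_le_card ?_)
    intro v hv
    simp only [Finset.mem_filter, Finset.mem_univ, true_and] at hv ⊢
    obtain ⟨e, hte, hfe⟩ := hv
    have hsub : (cylF e : Set Omega) ⊆ cylF v := by
      intro x hx i
      rw [← hte]
      show x (i : ℕ) = e i.castSucc
      exact hx i.castSucc
    have hρe : ρ (cylF e) ≠ 0 := by
      intro h0
      rw [hf] at hfe
      simp only [h0, ENNReal.toReal_zero] at hfe
      exact lt_irrefl 0 hfe
    intro h0
    apply hρe
    exact le_antisymm (le_trans (measure_mono hsub) (le_of_eq h0)) zero_le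

lemma card_pos_cyl_le_perM {K : ℕ} {ξ : Measure Omega} (hξ : IsPeriodicMeasure ξ) :
    (Finset.univ.filter (fun v : Fin K → Bool => ξ (cylF v) ≠ 0)).card ≤ perM ξ := by
  have hne : {p | 0 < p ∧ ∃ x, shift^[p] x = x ∧ ξ = orbitMeasure x p}.Nonempty := by
    obtain ⟨x, p, hp, hx, rfl⟩ := hξ
    exact ⟨p, hp, x, hx, rfl⟩
  obtain ⟨hpos, x, hx, hrep⟩ := Nat.sInf_mem hne
  have hrep' : ξ = orbitMeasure x (perM ξ) := hrep
  have hch : ∀ v ∈ Finset.univ.filter (fun v : Fin K → Bool => ξ (cylF v) ≠ 0),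
      ∃ t, t ∈ Finset.range (perM ξ) ∧ shift^[t] x ∈ cylF v := by
    intro v hv
    simp only [Finset.mem_filter, Finset.mem_univ, true_and] at hv
    by_contra hcon
    push_neg at hcon
    apply hv
    rw [hrep', orbit_apply _ _ _ (measurableSet_cylF v)]
    have hemp : (Finset.range (perM ξ)).filter (fun t => shift^[t] x ∈ cylF v) = ∅ := by
      rw [Finset.filter_eq_empty_iff]
      intro t ht
      exact hcon t ht
    rw [hemp]
    simp
  have hcard : perM ξ = (Finset.range (perM ξ)).card := (Finset.card_range _).symm
  rw [hcard]
  set F : (Fin K → Bool) → ℕ := fun v =>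
    if h : ∃ t, t ∈ Finset.range (perM ξ) ∧ shift^[t] x ∈ cylF v then h.choose else 0
  apply Finset.card_le_card_of_injOn F
  · intro v hv
    have h := hch v hv
    simp only [F, dif_pos h]
    exact h.choose_spec.1
  · intro v1 hv1 v2 hv2 hF
    have h1 := hch v1 (Finset.mem_coe.mp hv1)
    have h2 := hch v2 (Finset.mem_coe.mp hv2)
    simp only [F, dif_pos h1, dif_pos h2] at hF
    have m1 := h1.choose_spec.2
    have m2 := h2.choose_spec.2
    rw [hF] at m1
    funext i
    rw [← m1 i, ← m2 i]

lemma uk_nonempty (ν μ : Measure Omega) (n K : ℕ) (hν : InvariantProb ν) :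
    (ukValues ν μ n (K+1)).Nonempty := by
  obtain ⟨m, ξ, q, hC, hq0, hq1, hmatch, _⟩ := measure_decomp K ν hν
  exact ⟨_, m, ξ, q, hC, hq0, hq1, hmatch, rfl⟩

lemma elt_le (ν μ : Measure Omega) (n : ℕ) (hν : InvariantProb ν) (K l : ℕ)
    (hnk : n ≤ K + 1) (hkl : K + 1 ≤ l) {b : ℝ} (hb : b ∈ ukValues ν μ n l) :
    ∃ a ∈ ukValues ν μ n (K+1), a ≤ b := by
  obtain ⟨m, ξ, q, hC, hq0, hq1, hmatch, hbval⟩ := hb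
  have hInv : ∀ i, InvariantProb (ξ i) := by
    intro i
    obtain ⟨x, p, hp, hx, hrep⟩ := (hC i).1
    rw [hrep]
    exact orbit_invariantProb hp hx
  have hprob : ∀ i, IsProbabilityMeasure (ξ i) := fun i => (hInv i).1
  have hdec := fun i => measure_decomp K (ξ i) (hInv i)
  choose M ζ r hC' hr0 hr1 hmatch' hper' using hdec
  have hprob' : ∀ i j, IsProbabilityMeasure (ζ i j) := by
    intro i j
    obtain ⟨x, p, hp, hx, hrep⟩ := (hC' i j).1
    rw [hrep]
    haveI : NeZero p := ⟨hp.ne'⟩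
    exact orbit_prob x p
  haveI := hν.1
  set T := (i : Fin m) × Fin (M i) with hT
  set mT := Fintype.card T with hmT
  set eqv : Fin mT ≃ T := (Fintype.equivFin T).symm with heqv
  set ξ' : Fin mT → Measure Omega := fun j => ζ (eqv j).1 (eqv j).2 with hξ'
  set q' : Fin mT → ℝ := fun j => q (eqv j).1 * r (eqv j).1 (eqv j).2 with hq'
  have hsum_tr : ∀ F : T → ℝ,
      ∑ j : Fin mT, F (eqv j) = ∑ i : Fin m, ∑ j2 : Fin (M i), F ⟨i, j2⟩ := by
    intro F
    rw [Equiv.sum_comp eqv F, ← Finset.univ_sigma_univ, Finset.sum_sigma]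
  -- level-(K+1) marginal matching with ν
  have hmk : ∀ w : Fin (K+1) → Bool,
      ∑ i, q i * ((ξ i) (cylF w)).toReal = (ν (cylF w)).toReal := by
    intro w
    have hxi : ∀ i, haveI := hprob i; ((ξ i) (cylF w)).toReal
        = ∑ w' ∈ Finset.univ.filter
            (fun w' : Fin l → Bool => ∀ i : Fin (K+1), w' (Fin.castLE hkl i) = w i),
          ((ξ i) (cylF w')).toReal := by
      intro i
      haveI := hprob i
      exact cyl_marg_meas hkl (ξ i) w
    rw [cyl_marg_meas hkl ν w]
    calc ∑ i, q i * ((ξ i) (cylF w)).toReal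
        = ∑ i, ∑ w' ∈ Finset.univ.filter
            (fun w' : Fin l → Bool => ∀ i : Fin (K+1), w' (Fin.castLE hkl i) = w i),
            q i * ((ξ i) (cylF w')).toReal := by
          apply Finset.sum_congr rfl
          intro i _
          rw [hxi i, Finset.mul_sum]
      _ = ∑ w' ∈ Finset.univ.filter
            (fun w' : Fin l → Bool => ∀ i : Fin (K+1), w' (Fin.castLE hkl i) = w i),
            ∑ i, q i * ((ξ i) (cylF w')).toReal := Finset.sum_comm
      _ = ∑ w' ∈ Finset.univ.filter
            (fun w' : Fin l → Bool => ∀ i : Fin (K+1), w' (Fin.castLE hkl i) = w i),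
            (ν (cylF w')).toReal := by
          apply Finset.sum_congr rfl
          intro w' _
          exact hmatch w'
  -- decomposition sums to ξ i on Bbasin
  have hζB : ∀ i, ∑ j2, r i j2 * ((ζ i j2) (Bbasin μ n)).toReal
      = ((ξ i) (Bbasin μ n)).toReal := by
    intro i
    haveI := hprob i
    rw [Bbasin_meas hnk μ (ξ i)]
    calc ∑ j2, r i j2 * ((ζ i j2) (Bbasin μ n)).toReal
        = ∑ j2, ∑ w ∈ Finset.univ.filter
            (fun w : Fin (K+1) → Bool => ∃ y ∈ msupp μ, ∀ i : Fin n, y i = w (Fin.castLE hnk i)),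
            r i j2 * ((ζ i j2) (cylF w)).toReal := by
          apply Finset.sum_congr rfl
          intro j2 _
          haveI := hprob' i j2
          rw [Bbasin_meas hnk μ (ζ i j2), Finset.mul_sum]
      _ = ∑ w ∈ Finset.univ.filter
            (fun w : Fin (K+1) → Bool => ∃ y ∈ msupp μ, ∀ i : Fin n, y i = w (Fin.castLE hnk i)),
            ∑ j2, r i j2 * ((ζ i j2) (cylF w)).toReal := Finset.sum_comm
      _ = ∑ w ∈ Finset.univ.filter
            (fun w : Fin (K+1) → Bool => ∃ y ∈ msupp μ, ∀ i : Fin n, y i = w (Fin.castLE hnk i)),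
            ((ξ i) (cylF w)).toReal := by
          apply Finset.sum_congr rfl
          intro w _
          exact hmatch' i w
  refine ⟨∑ j ∈ Finset.univ.filter (fun j => perM μ ≤ perM (ξ' j)),
      q' j * ((ξ' j) (Bbasin μ n)).toReal,
    ⟨mT, ξ', q', fun j => hC' _ _, fun j => mul_nonneg (hq0 _) (hr0 _ _), ?_, ?_, rfl⟩, ?_⟩
  · -- total mass one
    have := hsum_tr (fun t => q t.1 * r t.1 t.2)
    rw [this]
    calc ∑ i, ∑ j2, q i * r i j2 = ∑ i, q i * ∑ j2, r i j2 := by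
          apply Finset.sum_congr rfl
          intro i _
          rw [Finset.mul_sum]
      _ = ∑ i, q i := by
          apply Finset.sum_congr rfl
          intro i _
          rw [hr1 i, mul_one]
      _ = 1 := hq1
  · -- marginal matching
    intro w
    have := hsum_tr (fun t => q t.1 * r t.1 t.2 * ((ζ t.1 t.2) (cylF w)).toReal)
    rw [this]
    rw [← hmk w]
    apply Finset.sum_congr rfl
    intro i _
    rw [← hmatch' i w, Finset.mul_sum]
    apply Finset.sum_congr rfl
    intro j2 _
    ring
  · -- the value inequality
    rw [hbval]
    rw [Finset.sum_filter, Finset.sum_filter]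
    have := hsum_tr (fun t => if perM μ ≤ perM (ζ t.1 t.2) then
      q t.1 * r t.1 t.2 * ((ζ t.1 t.2) (Bbasin μ n)).toReal else 0)
    rw [this]
    apply Finset.sum_le_sum
    intro i _
    rcases le_or_gt (perM μ) (perM (ξ i)) with hgood | hbad
    · rw [if_pos hgood]
      calc ∑ j2, (if perM μ ≤ perM (ζ i j2) then
              q i * r i j2 * ((ζ i j2) (Bbasin μ n)).toReal else 0)
          ≤ ∑ j2, q i * r i j2 * ((ζ i j2) (Bbasin μ n)).toReal := by
            apply Finset.sum_le_sum
            intro j2 _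
            split
            · exact le_rfl
            · exact mul_nonneg (mul_nonneg (hq0 i) (hr0 i j2)) ENNReal.toReal_nonneg
        _ = q i * ((ξ i) (Bbasin μ n)).toReal := by
            rw [← hζB i, Finset.mul_sum]
            apply Finset.sum_congr rfl
            intro j2 _
            ring
    · rw [if_neg (not_le.mpr hbad)]
      have hzero : ∀ j2, perM (ζ i j2) < perM μ := by
        intro j2
        have h1 := hper' i j2
        have h2 := card_pos_cyl_le_perM (K := K) (hC i).1
        omega
      apply le_of_eq
      apply Finset.sum_eq_zero
      intro j2 _
      rw [if_neg (not_le.mpr (hzero j2))]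

lemma orbit_fixed {x : Omega} (hσ : shift x = x) {p : ℕ} (hp : 0 < p) :
    orbitMeasure x p = orbitMeasure x 1 := by
  have hiter : ∀ j, shift^[j] x = x := fun j => Function.iterate_fixed hσ j
  unfold orbitMeasure
  have h1 : ∀ q : ℕ, ∑ j ∈ Finset.range q, Measure.dirac (shift^[j] x)
      = (q : ℕ) • Measure.dirac x := by
    intro q
    rw [Finset.sum_congr rfl (fun j _ => by rw [hiter j])]
    rw [Finset.sum_const, Finset.card_range]
  rw [h1, h1]
  rw [← Nat.cast_smul_eq_nsmul ℝ≥0∞ p, ← Nat.cast_smul_eq_nsmul ℝ≥0∞ 1, smul_smul, smul_smul,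
    ENNReal.inv_mul_cancel (by exact_mod_cast hp.ne') (by simp)]
  norm_num

lemma perM_eq_one_of_C0 {μ : Measure Omega} (hμ : MemCn 0 μ) : perM μ = 1 := by
  obtain ⟨x, p, hp, hx, hrep⟩ := hμ.1
  have hx0 : x ∈ msupp μ := by
    rw [hrep]
    exact orbit_mem_msupp hp hp
  have hσx : shift x = x := by
    rcases Nat.lt_or_ge p 2 with h1 | h2
    · have hp1 : p = 1 := by omega
      rw [hp1] at hx
      rwa [Function.iterate_one] at hx
    · have hx1 : shift x ∈ msupp μ := by
        rw [hrep]
        have := orbit_mem_msupp (x := x) hp (by omega : 1 < p)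
        rwa [Function.iterate_one] at this
      exact (hμ.2 x hx0 (shift x) hx1 (fun k hk => absurd hk (by omega))).symm
  have hrep1 : μ = orbitMeasure x 1 := by
    rw [hrep, orbit_fixed hσx hp]
  have hle : perM μ ≤ 1 := perM_le one_pos (by rw [Function.iterate_one]; exact hσx) hrep1
  have hpos : 0 < perM μ := perM_pos ⟨x, p, hp, hx, hrep⟩
  omega

lemma Bbasin_zero {μ : Measure Omega} (hμ : IsPeriodicMeasure μ) :
    Bbasin μ 0 = Set.univ := by
  obtain ⟨x, p, hp, hx, hrep⟩ := hμ
  have hx0 : x ∈ msupp μ := by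
    rw [hrep]
    exact orbit_mem_msupp hp hp
  ext z
  simp only [Bbasin, Set.mem_setOf_eq, Set.mem_univ, iff_true]
  exact ⟨x, hx0, fun i hi => absurd hi (Nat.not_lt_zero i)⟩

lemma prob_of_periodic {ξ : Measure Omega} (hξ : IsPeriodicMeasure ξ) :
    IsProbabilityMeasure ξ := by
  obtain ⟨x, p, hp, hx, rfl⟩ := hξ
  haveI : NeZero p := ⟨hp.ne'⟩
  exact orbit_prob x p

lemma uk0_eq_one {ν μ : Measure Omega} {l : ℕ} (hμ : MemCn 0 μ) {b : ℝ}
    (hb : b ∈ ukValues ν μ 0 l) : b = 1 := by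
  obtain ⟨m, ξ, q, hC, hq0, hq1, hmatch, hbval⟩ := hb
  have hper1 : perM μ = 1 := perM_eq_one_of_C0 hμ
  have hfilter : Finset.univ.filter (fun i => perM μ ≤ perM (ξ i)) = Finset.univ := by
    apply Finset.filter_true_of_mem
    intro i _
    rw [hper1]
    exact perM_pos (hC i).1
  rw [hbval, hfilter, ← hq1]
  apply Finset.sum_congr rfl
  intro i _
  haveI := prob_of_periodic (hC i).1
  rw [Bbasin_zero hμ.1]
  simp

lemma one_mem_uk0 {ν μ : Measure Omega} (hν : InvariantProb ν) (hμ : MemCn 0 μ) :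
    (1 : ℝ) ∈ ukValues ν μ 0 0 := by
  haveI := hν.1
  set x0 : Omega := fun _ => false with hx0
  have hfix : shift^[1] x0 = x0 := funext fun i => rfl
  set ξ0 := orbitMeasure x0 1 with hξ0
  have hperiodic : IsPeriodicMeasure ξ0 := ⟨x0, 1, one_pos, hfix, rfl⟩
  haveI := prob_of_periodic hperiodic
  have hC0 : MemCn 0 ξ0 := by
    refine ⟨hperiodic, ?_⟩
    intro a ha b hb _
    have ha' := msupp_orbit_subset x0 1 ha
    have hb' := msupp_orbit_subset x0 1 hb
    obtain ⟨j, hj, rfl⟩ := ha'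
    obtain ⟨j', hj', rfl⟩ := hb'
    interval_cases j
    interval_cases j'
    rfl
  have hcylzero : ∀ w : Fin 0 → Bool, cylF w = Set.univ := by
    intro w
    ext z
    simp only [cylF, Set.mem_setOf_eq, Set.mem_univ, iff_true]
    exact fun i => i.elim0
  refine ⟨1, fun _ => ξ0, fun _ => 1, fun _ => hC0, fun _ => zero_le_one, by simp, ?_, ?_⟩
  · intro w
    rw [hcylzero w]
    simp
  · have hfilter : (Finset.univ : Finset (Fin 1)).filter
        (fun i => perM μ ≤ perM ξ0) = Finset.univ := by
      apply Finset.filter_true_of_mem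
      intro i _
      rw [perM_eq_one_of_C0 hμ]
      exact perM_pos hperiodic
    rw [hfilter, Bbasin_zero hμ.1]
    simp

lemma uk_bddBelow (ν μ : Measure Omega) (n k : ℕ) : BddBelow (ukValues ν μ n k) := by
  refine ⟨0, ?_⟩
  rintro a ⟨m, ξ, q, hC, hq0, hq1, hmatch, rfl⟩
  apply Finset.sum_nonneg
  intro i _
  exact mul_nonneg (hq0 i) ENNReal.toReal_nonneg


/-- **Monotonicity of `(u_k)`.**  Fix an invariant probability measure `ν`, `n ∈ ℕ` and
`μ ∈ 𝒞_n`.  For `k ≥ n` let `u_k` be the minimal value of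
`Σ_{ξ ∈ 𝒞_k, per(ξ) ≥ per(μ)} p_k(ξ) ξ(B_{μ,n})` over all convex combinations
`ν_k = Σ_{ξ ∈ 𝒞_k} p_k(ξ) ξ` with `π_k(ν_k) = π_k(ν)`.  Then `(u_k)_{k ≥ n}` is
monotone nondecreasing. -/
theorem uk_monotone (ν : MeasureTheory.Measure Omega) (hν : InvariantProb ν) (n : ℕ)
    (μ : MeasureTheory.Measure Omega) (hμ : MemCn n μ) :
    ∀ k l, n ≤ k → k ≤ l → sInf (ukValues ν μ n k) ≤ sInf (ukValues ν μ n l) := by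
  intro k l hnk hkl
  rcases Nat.eq_zero_or_pos l with hl0 | hl
  · have hk0 : k = 0 := by omega
    rw [hk0, hl0]
  · obtain ⟨L, rfl⟩ : ∃ L, l = L + 1 := ⟨l - 1, by omega⟩
    apply le_csInf (uk_nonempty ν μ n L hν)
    intro b hb
    rcases Nat.eq_zero_or_pos k with hk0 | hk
    · subst hk0
      have hn0 : n = 0 := by omega
      subst hn0
      have hb1 : b = 1 := uk0_eq_one hμ hb
      have h1 : (1:ℝ) ∈ ukValues ν μ 0 0 := one_mem_uk0 hν hμ
      rw [hb1]
      exact csInf_le (uk_bddBelow ν μ 0 0) h1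
    · obtain ⟨K, rfl⟩ : ∃ K, k = K + 1 := ⟨k - 1, by omega⟩
      obtain ⟨a, ha, hab⟩ := elt_le ν μ n hν K (L+1) hnk hkl hb
      exact le_trans (csInf_le (uk_bddBelow ν μ n (K+1)) ha) hab
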